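/- Let T_1, …, T_m and U_1, …, U_{m'} be continuous linear maps H → H such that T_i ∘ S = c_i · (S ∘ T_i*) for nonzero reals c_i and U_j ∘ S = e_j · (S ∘ U_j*) for nonzero reals e_j (adjoints taken in H). Then S maps the subspace (⋂_{i=1}^{m} ker T_i) ∩ (∑_{j=1}^{m'} closure(Im U_j))^⊥ onto the subspace (⋂_{j=1}^{m'} ker U_j) ∩ (∑_{i=1}^{m} closure(Im T_i))^⊥. (This is the abstract form of the statement that the collection of spectral complexes, given by the subspaces Z_{r_1} ∩ (B_{r_2})^⊥, is closed under Hodge-star duality: ⋆[Z_{r_1} ∩ (B_{r_2})^⊥] = Z_{r_2} ∩ (B_{r_1})^⊥.) -/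

import Mathlib

lemma aux_closure_orth {H : Type*} [NormedAddCommGroup H] [InnerProductSpace ℝ H]
    (K : Submodule ℝ H) : (K.topologicalClosure)ᗮ = Kᗮ := by
  refine le_antisymm (Submodule.orthogonal_le K.le_topologicalClosure) ?_
  intro x hx
  rw [Submodule.mem_orthogonal]
  intro u hu
  have hsub : (K : Set H) ⊆ {v | inner ℝ v x = (0 : ℝ)} := fun v hv =>
    (Submodule.mem_orthogonal K x).mp hx v hv
  have hclosed : IsClosed {v : H | inner ℝ v x = (0 : ℝ)} :=
    isClosed_eq (Continuous.inner continuous_id continuous_const) continuous_const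
  have : (K.topologicalClosure : Set H) ⊆ {v | inner ℝ v x = (0 : ℝ)} := by
    rw [Submodule.topologicalClosure_coe]
    exact closure_minimal hsub hclosed
  exact this hu

lemma aux_range_orth {H : Type*} [NormedAddCommGroup H] [InnerProductSpace ℝ H]
    [CompleteSpace H] (A : H →L[ℝ] H) (x : H) :
    x ∈ (LinearMap.range (A : H →ₗ[ℝ] H))ᗮ ↔ ContinuousLinearMap.adjoint A x = 0 := by
  rw [Submodule.mem_orthogonal]
  constructor
  · intro h
    have := h (A (ContinuousLinearMap.adjoint A x)) ⟨_, rfl⟩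
    rw [← ContinuousLinearMap.adjoint_inner_right, real_inner_self_eq_norm_sq] at this
    rw [pow_eq_zero_iff two_ne_zero, norm_eq_zero] at this; exact this
  · rintro h _ ⟨y, rfl⟩
    show inner ℝ (A y) x = 0
    rw [← ContinuousLinearMap.adjoint_inner_right, h, inner_zero_right]

/-- Abstract form of the statement that the collection of spectral complexes
`Z_{r₁} ∩ (B_{r₂})ᗮ` is closed under Hodge-star duality.  Let `S` be a linear isometric
bijection of a real Hilbert space with `S ∘ S = ε • id`, `ε ∈ {1, −1}`.  If
`Tᵢ ∘ S = cᵢ • (S ∘ Tᵢ*)` and `Uⱼ ∘ S = eⱼ • (S ∘ Uⱼ*)` for nonzero reals `cᵢ, eⱼ`, then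
`S` maps `(⋂ᵢ ker Tᵢ) ∩ (∑ⱼ closure (Im Uⱼ))ᗮ` onto `(⋂ⱼ ker Uⱼ) ∩ (∑ᵢ closure (Im Tᵢ))ᗮ`. -/
theorem hodge_star_spectral_complexes
    {H : Type*} [NormedAddCommGroup H] [InnerProductSpace ℝ H] [CompleteSpace H]
    (S : H ≃ₗᵢ[ℝ] H) (ε : ℝ) (hε : ε = 1 ∨ ε = -1)
    (hSS : ∀ x : H, S (S x) = ε • x)
    (m m' : ℕ) (T : Fin m → H →L[ℝ] H) (U : Fin m' → H →L[ℝ] H)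
    (c : Fin m → ℝ) (e : Fin m' → ℝ)
    (hc : ∀ i, c i ≠ 0) (he : ∀ j, e j ≠ 0)
    (hT : ∀ (i : Fin m) (x : H), T i (S x) = c i • S (ContinuousLinearMap.adjoint (T i) x))
    (hU : ∀ (j : Fin m') (x : H), U j (S x) = e j • S (ContinuousLinearMap.adjoint (U j) x)) :
    ⇑S '' (((⨅ i, LinearMap.ker (T i : H →ₗ[ℝ] H))
        ⊓ (⨆ j, (LinearMap.range (U j : H →ₗ[ℝ] H)).topologicalClosure)ᗮ : Submodule ℝ H) : Set H)
      = (((⨅ j, LinearMap.ker (U j : H →ₗ[ℝ] H))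
        ⊓ (⨆ i, (LinearMap.range (T i : H →ₗ[ℝ] H)).topologicalClosure)ᗮ : Submodule ℝ H) : Set H) := by
  have hε0 : ε ≠ 0 := by rcases hε with h | h <;> simp [h]
  have hSinj : ∀ z : H, S z = 0 → z = 0 := by
    intro z hz
    have := S.injective (a₁ := z) (a₂ := 0) (by simpa using hz)
    simpa using this
  have memL : ∀ x : H,
      x ∈ ((⨅ i, LinearMap.ker (T i : H →ₗ[ℝ] H))
        ⊓ (⨆ j, (LinearMap.range (U j : H →ₗ[ℝ] H)).topologicalClosure)ᗮ : Submodule ℝ H)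
      ↔ (∀ i, T i x = 0) ∧ ∀ j, ContinuousLinearMap.adjoint (U j) x = 0 := by
    intro x
    rw [Submodule.mem_inf, ← Submodule.iInf_orthogonal]
    simp [Submodule.mem_iInf, LinearMap.mem_ker, aux_closure_orth, aux_range_orth]
  have memR : ∀ x : H,
      x ∈ ((⨅ j, LinearMap.ker (U j : H →ₗ[ℝ] H))
        ⊓ (⨆ i, (LinearMap.range (T i : H →ₗ[ℝ] H)).topologicalClosure)ᗮ : Submodule ℝ H)
      ↔ (∀ j, U j x = 0) ∧ ∀ i, ContinuousLinearMap.adjoint (T i) x = 0 := by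
    intro x
    rw [Submodule.mem_inf, ← Submodule.iInf_orthogonal]
    simp [Submodule.mem_iInf, LinearMap.mem_ker, aux_closure_orth, aux_range_orth]
  have key : ∀ x : H,
      ((∀ i, T i x = 0) ∧ ∀ j, ContinuousLinearMap.adjoint (U j) x = 0)
      ↔ ((∀ j, U j (S x) = 0) ∧ ∀ i, ContinuousLinearMap.adjoint (T i) (S x) = 0) := by
    intro x
    have hTkey : ∀ i, (T i x = 0 ↔ ContinuousLinearMap.adjoint (T i) (S x) = 0) := by
      intro i
      have h1 : ε • T i x = c i • S (ContinuousLinearMap.adjoint (T i) (S x)) := by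
        rw [← hT i (S x), hSS x, map_smul]
      constructor
      · intro h
        have h2 : S (ContinuousLinearMap.adjoint (T i) (S x)) = 0 := by
          have := h1.symm
          rw [h, smul_zero] at this
          exact (smul_eq_zero.mp this).resolve_left (hc i)
        exact hSinj _ h2
      · intro h
        rw [h, map_zero, smul_zero] at h1
        exact (smul_eq_zero.mp h1).resolve_left hε0
    have hUkey : ∀ j, (ContinuousLinearMap.adjoint (U j) x = 0 ↔ U j (S x) = 0) := by
      intro j
      rw [hU j x]
      constructor
      · intro h; rw [h, map_zero, smul_zero]
      · intro h
        exact hSinj _ ((smul_eq_zero.mp h).resolve_left (he j))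
    constructor
    · rintro ⟨h1, h2⟩
      exact ⟨fun j => (hUkey j).mp (h2 j), fun i => (hTkey i).mp (h1 i)⟩
    · rintro ⟨h1, h2⟩
      exact ⟨fun i => (hTkey i).mpr (h2 i), fun j => (hUkey j).mpr (h1 j)⟩
  ext y
  simp only [Set.mem_image, SetLike.mem_coe]
  constructor
  · rintro ⟨x, hx, rfl⟩
    rw [memR]
    exact (key x).mp ((memL x).mp hx)
  · intro hy
    refine ⟨ε • S y, ?_, ?_⟩
    · rw [memL]
      apply (key _).mpr
      have hS : S (ε • S y) = y := by
        rw [map_smul, hSS, smul_smul]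
        rcases hε with h | h <;> simp [h]
      rw [hS]
      exact (memR y).mp hy
    · rw [map_smul, hSS, smul_smul]
      rcases hε with h | h <;> simp [h]
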